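/- Under the highest-weight axioms, if there exists a non-split short exact sequence of A-modules 0 → L(μ) → X → Δ(λ) → 0, then λ < μ. (Equivalently, Ext^1(Δ(λ), L(μ)) ≠ 0 implies λ < μ.) -/

import Mathlib

/-- The subquotient `q / p` associated with submodules `p ≤ q` of a module. -/
abbrev Subquot {A M : Type} [Ring A] [AddCommGroup M] [Module A M]
    (p q : Submodule A M) : Type :=
  ↥q ⧸ (p.comap q.subtype)

/-- `M` has a finite filtration `0 = M₀ ⊆ M₁ ⊆ ⋯ ⊆ M_r = M` whose successive
quotients are standard modules `Δ μ` with `μ ∈ S`. -/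
def HasFilt (A : Type) [Ring A] {Λ : Type} (Δ : Λ → Type)
    [∀ l, AddCommGroup (Δ l)] [∀ l, Module A (Δ l)]
    (S : Set Λ) (M : Type) [AddCommGroup M] [Module A M] : Prop :=
  ∃ (r : ℕ) (c : Fin (r + 1) → Submodule A M),
    Monotone c ∧ c 0 = ⊥ ∧ c (Fin.last r) = ⊤ ∧
    ∀ k : Fin r, ∃ μ ∈ S, Nonempty (Subquot (c k.castSucc) (c k.succ) ≃ₗ[A] Δ μ)

/-- `M` belongs to the class `C_S`: every simple subquotient of `M` is isomorphic
to some `L μ` with `μ ∈ S`. -/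
def InC (A : Type) [Ring A] {Λ : Type} (L : Λ → Type)
    [∀ l, AddCommGroup (L l)] [∀ l, Module A (L l)]
    (S : Set Λ) (M : Type) [AddCommGroup M] [Module A M] : Prop :=
  ∀ p q : Submodule A M, p ≤ q → IsSimpleModule A (Subquot p q) →
    ∃ μ ∈ S, Nonempty (Subquot p q ≃ₗ[A] L μ)

/-- under the highest-weight axioms, a non-split extension
`0 → L(μ) → X → Δ(λ) → 0` forces `λ < μ`. -/
theorem stmt12 (K A : Type) [Field K] [Ring A] [Algebra K A] [FiniteDimensional K A]
    (Λ : Type) [Fintype Λ] [PartialOrder Λ]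
    (L : Λ → Type) [∀ l, AddCommGroup (L l)] [∀ l, Module A (L l)]
    [∀ l, Module.Finite A (L l)]
    (Δ : Λ → Type) [∀ l, AddCommGroup (Δ l)] [∀ l, Module A (Δ l)]
    [∀ l, Module.Finite A (Δ l)]
    (P : Λ → Type) [∀ l, AddCommGroup (P l)] [∀ l, Module A (P l)]
    [∀ l, Module.Finite A (P l)]
    -- the simple modules `L λ`, pairwise non-isomorphic, exhausting all simples
    (hsimple : ∀ l, IsSimpleModule A (L l))
    (hdistinct : ∀ l m, l ≠ m → IsEmpty (L l ≃ₗ[A] L m))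
    (hall : ∀ (M : Type) [AddCommGroup M] [Module A M] [Module.Finite A M],
      IsSimpleModule A M → ∃ l, Nonempty (M ≃ₗ[A] L l))
    -- axiom (1)
    (hhom : ∀ l m, ¬ l ≤ m → ∀ f : Δ l →ₗ[A] Δ m, f = 0)
    -- axiom (2): endomorphisms of `Δ λ` are scalars from `K`
    (hend : ∀ l (f : Δ l →ₗ[A] Δ l), ∃ c : K, ∀ x, f x = algebraMap K A c • x)
    -- axiom (3): projective covers `P λ ↠ L λ` and `P λ ↠ Δ λ` with suitably
    -- filtered kernel
    (hproj : ∀ l, Module.Projective A (P l))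
    (pr : ∀ l, P l →ₗ[A] L l)
    (hprsurj : ∀ l, Function.Surjective (pr l))
    (hprcover : ∀ l (N : Submodule A (P l)), Submodule.map (pr l) N = ⊤ → N = ⊤)
    (rh : ∀ l, P l →ₗ[A] Δ l)
    (hrhsurj : ∀ l, Function.Surjective (rh l))
    (hrhker : ∀ l, HasFilt A Δ {ν | l < ν} ↥(LinearMap.ker (rh l)))
    -- a non-split short exact sequence `0 → L μ → X → Δ λ → 0`
    (l m : Λ) (X : Type) [AddCommGroup X] [Module A X] [Module.Finite A X]
    (f : L m →ₗ[A] X) (g : X →ₗ[A] Δ l)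
    (hf : Function.Injective f) (hg : Function.Surjective g)
    (hexact : LinearMap.range f = LinearMap.ker g)
    (hnonsplit : ∀ s : Δ l →ₗ[A] X, g.comp s ≠ LinearMap.id) :
    l < m := by
  haveI := hproj l
  haveI : Nontrivial (L m) := IsSimpleModule.nontrivial A (L m)
  haveI : IsSimpleOrder (Submodule A (L m)) := (hsimple m).toIsSimpleOrder
  obtain ⟨φ, hφ⟩ := Module.projective_lifting_property g (rh l) hg
  have hφ' : ∀ x : P l, g (φ x) = rh l x := fun x =>
    congrArg (fun (u : P l →ₗ[A] Δ l) => u x) hφ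
  by_cases hz : ∀ x : P l, rh l x = 0 → φ x = 0
  · -- `φ` induces a splitting `Δ l → X`, contradicting non-splitness
    exfalso
    have hle : LinearMap.ker (rh l) ≤ LinearMap.ker φ := fun x hx => hz x hx
    set e2 := (rh l).quotKerEquivOfSurjective (hrhsurj l) with he2
    set s : Δ l →ₗ[A] X :=
      (Submodule.liftQ _ φ hle).comp (e2.symm : Δ l →ₗ[A] _) with hs
    apply hnonsplit s
    apply LinearMap.ext
    intro d
    obtain ⟨p, hp⟩ := hrhsurj l d
    have h1 : e2 (Submodule.Quotient.mk p) = d := by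
      rw [he2]
      simpa [LinearMap.quotKerEquivOfSurjective] using hp
    have h2 : e2.symm d = Submodule.Quotient.mk p := by
      rw [← h1, LinearEquiv.symm_apply_apply]
    simp only [hs, LinearMap.comp_apply, LinearMap.id_apply, LinearEquiv.coe_coe, h2,
      Submodule.liftQ_apply]
    rw [hφ' p, hp]
  · push_neg at hz
    obtain ⟨x₀, hx₀, hφx₀⟩ := hz
    -- the map ψ : ker (rh l) → L m
    set N := LinearMap.ker (rh l) with hN
    have hmem : ∀ x : ↥N, φ (N.subtype x) ∈ LinearMap.range f := by
      intro x
      rw [hexact, LinearMap.mem_ker, hφ']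
      exact x.2
    set e := LinearEquiv.ofInjective f hf with he
    set ψ : ↥N →ₗ[A] L m :=
      (e.symm : ↥(LinearMap.range f) →ₗ[A] L m).comp
        (LinearMap.codRestrict _ (φ.comp N.subtype) hmem) with hψdef
    have hψval : ∀ x : ↥N, f (ψ x) = φ (N.subtype x) := by
      intro x
      have : e (ψ x) = ⟨φ (N.subtype x), hmem x⟩ := by
        simp only [hψdef, LinearMap.comp_apply, LinearEquiv.coe_coe,
          LinearEquiv.apply_symm_apply]
        rfl
      have h2 := congrArg (Subtype.val) this
      simpa [he, LinearEquiv.ofInjective_apply] using h2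
    have hψne : ∃ x : ↥N, ψ x ≠ 0 := by
      refine ⟨⟨x₀, by simpa [hN, LinearMap.mem_ker] using hx₀⟩, fun h0 => hφx₀ ?_⟩
      have := hψval ⟨x₀, by simpa [hN, LinearMap.mem_ker] using hx₀⟩
      rw [h0, map_zero] at this
      simpa using this.symm
    -- use the filtration of ker (rh l)
    obtain ⟨r, c, hmono, hc0, hclast, hquot⟩ := hrhker l
    have hstep : ∃ k : Fin r, c k.castSucc ≤ LinearMap.ker ψ ∧
        ¬ c k.succ ≤ LinearMap.ker ψ := by
      by_contra hcon
      push_neg at hcon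
      have hall' : ∀ j : Fin (r + 1), c j ≤ LinearMap.ker ψ := by
        intro j
        induction j using Fin.induction with
        | zero => rw [hc0]; exact bot_le
        | succ i ih => exact hcon i ih
      obtain ⟨x, hx⟩ := hψne
      exact hx ((hall' (Fin.last r)).trans (le_refl _) (by rw [hclast]; trivial))
    obtain ⟨k, hk1, hk2⟩ := hstep
    obtain ⟨ν, hν, ⟨iso⟩⟩ := hquot k
    -- nonzero map Δ ν → L m
    set ψk : ↥(c k.succ) →ₗ[A] L m := ψ.comp (c k.succ).subtype with hψk
    have hker : (c k.castSucc).comap (c k.succ).subtype ≤ LinearMap.ker ψk := by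
      intro x hx
      simp only [LinearMap.mem_ker, hψk, LinearMap.comp_apply]
      exact hk1 hx
    set ψbar := Submodule.liftQ _ ψk hker with hψbar
    set θ : Δ ν →ₗ[A] L m := ψbar.comp (iso.symm : Δ ν →ₗ[A] _) with hθ
    have hθsurj : Function.Surjective θ := by
      rw [← LinearMap.range_eq_top]
      rcases eq_bot_or_eq_top (LinearMap.range θ) with hb | ht
      · exfalso
        rw [SetLike.not_le_iff_exists] at hk2
        obtain ⟨x, hx, hxk⟩ := hk2
        have hxne : ψ x ≠ 0 := by
          intro h0
          exact hxk (by simpa [LinearMap.mem_ker] using h0)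
        have : θ (iso (Submodule.Quotient.mk ⟨x, hx⟩)) = ψ x := by
          simp [hθ, hψbar, hψk]
        have hmem2 : ψ x ∈ LinearMap.range θ := ⟨_, this⟩
        rw [hb] at hmem2
        exact hxne (by simpa using hmem2)
      · exact ht
    -- surjection P ν → L m
    set q : P ν →ₗ[A] L m := θ.comp (rh ν) with hq
    have hqsurj : Function.Surjective q := hθsurj.comp (hrhsurj ν)
    -- projective cover argument: m = ν
    have hmν : m = ν := by
      by_contra hne
      haveI : Nontrivial (L ν) := IsSimpleModule.nontrivial A (L ν)
      haveI : IsSimpleOrder (Submodule A (L ν)) := (hsimple ν).toIsSimpleOrder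
      rcases eq_bot_or_eq_top (Submodule.map (pr ν) (LinearMap.ker q)) with hb | ht
      · have hle2 : LinearMap.ker q ≤ LinearMap.ker (pr ν) := by
          intro x hx
          have : pr ν x ∈ Submodule.map (pr ν) (LinearMap.ker q) :=
            Submodule.mem_map_of_mem hx
          rw [hb] at this
          simpa [LinearMap.mem_ker] using this
        set e3 := q.quotKerEquivOfSurjective hqsurj with he3
        set h3 := Submodule.liftQ _ (pr ν) hle2 with hh3
        set t : L m →ₗ[A] L ν := h3.comp (e3.symm : L m →ₗ[A] _) with ht'
        have htsurj : Function.Surjective t := by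
          intro y
          obtain ⟨p, hp⟩ := hprsurj ν y
          refine ⟨e3 (Submodule.Quotient.mk p), ?_⟩
          simp [ht', hh3, hp]
        have htinj : Function.Injective t := by
          rw [← LinearMap.ker_eq_bot]
          rcases eq_bot_or_eq_top (LinearMap.ker t) with hb' | ht''
          · exact hb'
          · exfalso
            obtain ⟨y, hy⟩ := exists_ne (0 : L ν)
            obtain ⟨x, hx⟩ := htsurj y
            have : x ∈ LinearMap.ker t := by rw [ht'']; trivial
            rw [LinearMap.mem_ker] at this
            exact hy (by rw [← hx, this])
        exact (hdistinct m ν hne).false (LinearEquiv.ofBijective t ⟨htinj, htsurj⟩)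
      · have hkertop := hprcover ν _ ht
        obtain ⟨y, hy⟩ := exists_ne (0 : L m)
        obtain ⟨x, hx⟩ := hqsurj y
        have : x ∈ LinearMap.ker q := by rw [hkertop]; trivial
        rw [LinearMap.mem_ker] at this
        exact hy (by rw [← hx, this])
    rw [hmν]
    exact hν
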